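/- Let v_1,...,v_n be a vector k-coloring of a graph G (k > 2), and let i be a vertex with v_i = e_1 = (1,0,...,0). For each neighbor j of i, let v'_j be the unit vector obtained by projecting v_j onto the coordinates 2 through n and normalizing. Then for any two adjacent neighbors j, j' of i, ⟨v'_j, v'_{j'}⟩ ≤ -1/(k-2); i.e., the induced subgraph on the neighborhood of i is vector (k-1)-colorable. -/

import Mathlib

open scoped RealInnerProductSpace

/-- Projection of a vector in `ℝ^n` onto coordinates `2` through `n`
(i.e. zeroing out the first coordinate). -/
def projTail (n : ℕ) (x : EuclideanSpace ℝ (Fin n)) : EuclideanSpace ℝ (Fin n) :=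
  WithLp.toLp 2 (fun l => if (l : ℕ) = 0 then 0 else x l)

private lemma aux_ineq (k a b A B P : ℝ) (hk : 2 < k) (hA : 0 < A) (hB : 0 < B)
    (hA2 : A ^ 2 = 1 - a ^ 2) (hB2 : B ^ 2 = 1 - b ^ 2)
    (ha : a ≤ -1 / (k - 1)) (hb : b ≤ -1 / (k - 1))
    (hP : P ≤ -1 / (k - 1) - a * b) : P * (k - 2) ≤ -1 * (A * B) := by
  have hk1 : (0:ℝ) < k - 1 := by linarith
  have hk2 : (0:ℝ) < k - 2 := by linarith
  have hX : 0 ≤ -(a * (k - 1)) - 1 := by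
    have := (le_div_iff₀ hk1).mp ha
    linarith
  have hY : 0 ≤ -(b * (k - 1)) - 1 := by
    have := (le_div_iff₀ hk1).mp hb
    linarith
  have hPq : P * (k - 1) ≤ -1 - a * b * (k - 1) := by
    have h1 := mul_le_mul_of_nonneg_right hP hk1.le
    have h2 : (-1 / (k - 1) - a * b) * (k - 1) = -1 - a * b * (k - 1) := by
      field_simp
    linarith [h2 ▸ h1]
  have hmainAB : 2 * (k - 2) * ((k - 1) + a * b * (k - 1) ^ 2) ≥
      (k - 1) ^ 2 * (A ^ 2 + B ^ 2) := by
    rw [hA2, hB2]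
    nlinarith [mul_nonneg hX hY, mul_nonneg (mul_nonneg hX hY) hk2.le,
      mul_nonneg hX hk2.le, mul_nonneg hY hk2.le, sq_nonneg (a * (k - 1) + 1),
      sq_nonneg (b * (k - 1) + 1), hX, hY]
  have hAB2 : (k - 1) ^ 2 * (A ^ 2 + B ^ 2) ≥ 2 * (k - 1) ^ 2 * (A * B) := by
    nlinarith [mul_nonneg (sq_nonneg (k - 1)) (sq_nonneg (A - B))]
  have hstep : (1 + a * b * (k - 1)) * (k - 2) ≥ (k - 1) * (A * B) := by
    nlinarith [hmainAB, hAB2, hk1]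
  have hPq2 : P * (k - 2) * (k - 1) ≤ (-1 - a * b * (k - 1)) * (k - 2) := by
    nlinarith [mul_le_mul_of_nonneg_right hPq hk2.le]
  nlinarith [hPq2, hstep, hk1, hk2]

theorem neighborhood_vector_coloring (n : ℕ) (k : ℝ) (hk : 2 < k)
    (G : SimpleGraph (Fin n)) (v : Fin n → EuclideanSpace ℝ (Fin n))
    (hunit : ∀ i, ‖v i‖ = 1)
    (hvc : ∀ i j, G.Adj i j → ⟪v i, v j⟫ ≤ -1 / (k - 1))
    (i : Fin n) (hvi : ∀ l : Fin n, v i l = if (l : ℕ) = 0 then 1 else 0)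
    (v' : Fin n → EuclideanSpace ℝ (Fin n))
    (hv' : ∀ j, v' j = ‖projTail n (v j)‖⁻¹ • projTail n (v j)) :
    ∀ j j', G.Adj i j → G.Adj i j' → G.Adj j j' →
      projTail n (v j) ≠ 0 → projTail n (v j') ≠ 0 →
      ⟪v' j, v' j'⟫ ≤ -1 / (k - 2) := by
  intro j j' hij hij' hjj' hwj hwj'
  haveI : NeZero n := ⟨i.pos.ne'⟩
  -- key inner product formula for projTail
  have key : ∀ x y : EuclideanSpace ℝ (Fin n),
      ⟪projTail n x, projTail n y⟫ = ⟪x, y⟫ - x 0 * y 0 := by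
    intro x y
    simp only [PiLp.inner_apply, RCLike.inner_apply, starRingEnd_apply, star_trivial]
    rw [← Finset.add_sum_erase Finset.univ (fun l => projTail n y l * projTail n x l)
        (Finset.mem_univ (0 : Fin n)),
      ← Finset.add_sum_erase Finset.univ (fun l => y l * x l)
        (Finset.mem_univ (0 : Fin n))]
    have h0 : projTail n y 0 * projTail n x 0 = 0 := by simp [projTail]
    rw [h0]
    have : ∀ l ∈ Finset.univ.erase (0 : Fin n),
        projTail n y l * projTail n x l = y l * x l := by
      intro l hl
      have hl0 : (l : ℕ) ≠ 0 := by
        intro h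
        exact (Finset.mem_erase.mp hl).1 (Fin.ext h)
      simp [projTail, hl0, (Finset.mem_erase.mp hl).1]
    rw [Finset.sum_congr rfl this]
    ring
  -- inner with v i picks out coordinate 0
  have coord : ∀ x : EuclideanSpace ℝ (Fin n), ⟪v i, x⟫ = x 0 := by
    intro x
    simp only [PiLp.inner_apply, RCLike.inner_apply, starRingEnd_apply, star_trivial, hvi]
    rw [Finset.sum_eq_single (0 : Fin n)]
    · simp
    · intro l _ hl
      have : (l : ℕ) ≠ 0 := fun h => hl (Fin.ext h)
      simp [this]
    · simp
  have hnormsq : ∀ m : Fin n, ‖projTail n (v m)‖ ^ 2 = 1 - (v m 0) ^ 2 := by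
    intro m
    have h1 : ⟪projTail n (v m), projTail n (v m)⟫ = ⟪v m, v m⟫ - v m 0 * v m 0 := key _ _
    rw [real_inner_self_eq_norm_sq, real_inner_self_eq_norm_sq, hunit] at h1
    rw [h1]; ring
  have hA : (0:ℝ) < ‖projTail n (v j)‖ := norm_pos_iff.mpr hwj
  have hB : (0:ℝ) < ‖projTail n (v j')‖ := norm_pos_iff.mpr hwj'
  have ha : v j 0 ≤ -1 / (k - 1) := by rw [← coord (v j)]; exact hvc i j hij
  have hb : v j' 0 ≤ -1 / (k - 1) := by rw [← coord (v j')]; exact hvc i j' hij'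
  have hP : ⟪projTail n (v j), projTail n (v j')⟫ ≤ -1 / (k - 1) - v j 0 * v j' 0 := by
    rw [key]
    have := hvc j j' hjj'
    linarith
  have hgoal : ⟪v' j, v' j'⟫ =
      ‖projTail n (v j)‖⁻¹ * ‖projTail n (v j')‖⁻¹ *
        ⟪projTail n (v j), projTail n (v j')⟫ := by
    rw [hv' j, hv' j', real_inner_smul_left, real_inner_smul_right]
    ring
  rw [hgoal]
  have hk2 : (0:ℝ) < k - 2 := by linarith
  have hform : ‖projTail n (v j)‖⁻¹ * ‖projTail n (v j')‖⁻¹ *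
      ⟪projTail n (v j), projTail n (v j')⟫ =
      ⟪projTail n (v j), projTail n (v j')⟫ / (‖projTail n (v j)‖ * ‖projTail n (v j')‖) := by
    field_simp
  rw [hform, div_le_div_iff₀ (by positivity) hk2]
  exact aux_ineq k (v j 0) (v j' 0) _ _ _ hk hA hB (hnormsq j) (hnormsq j') ha hb hP
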